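/- The function κ(i) = ord_p(i!) − ⌊log_p i⌋ is nondecreasing on the positive integers, where ord_p denotes the p-adic valuation and ⌊log_p i⌋ is the integer part of the base-p logarithm. -/

import Mathlib

theorem stmt14 {p : ℕ} (hp : p.Prime) :
    ∀ i : ℕ, 1 ≤ i →
      (padicValNat p (Nat.factorial i) : ℤ) - (Nat.log p i : ℤ) ≤
        (padicValNat p (Nat.factorial (i + 1)) : ℤ) - (Nat.log p (i + 1) : ℤ) := by
  have : Fact p.Prime := ⟨hp⟩
  intro i hi
  have hp2 := hp.two_le
  have hfac : padicValNat p (Nat.factorial (i + 1))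
      = padicValNat p (i + 1) + padicValNat p (Nat.factorial i) := by
    rw [Nat.factorial_succ, padicValNat.mul (by omega) (Nat.factorial_ne_zero i)]
  suffices h : Nat.log p (i + 1) ≤ Nat.log p i + padicValNat p (i + 1) by
    rw [hfac, Nat.cast_add]; omega
  by_cases hdvd : p ∣ (i + 1)
  · have h1 : 1 ≤ padicValNat p (i + 1) := one_le_padicValNat_of_dvd (by omega) hdvd
    have h2 : Nat.log p (i + 1) ≤ Nat.log p (i * p) := Nat.log_mono_right (by nlinarith)
    rw [Nat.log_mul_base (by omega) (by omega)] at h2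
    omega
  · have h0 : padicValNat p (i + 1) = 0 := padicValNat.eq_zero_of_not_dvd hdvd
    rw [h0]
    by_contra h
    push_neg at h
    set m := Nat.log p (i + 1) with hm
    have hle : p ^ m ≤ i + 1 := Nat.pow_log_le_self p (by omega)
    have hgt : i < p ^ m := (Nat.log_lt_iff_lt_pow hp.one_lt (by omega)).mp h
    have heq : p ^ m = i + 1 := by omega
    exact hdvd (heq ▸ dvd_pow_self p (by omega))
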